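/- If x(t) satisfies ẋ = 3/2 - cos(x) with x(0) = 0, then x(t) = 2·arctan(tan(√5·t/4)/√5) for t ∈ (-2π/√5, 2π/√5). -/

import Mathlib

open Real


noncomputable def g (t : ℝ) : ℝ := 2 * Real.arctan (Real.tan (Real.sqrt 5 / 4 * t) / Real.sqrt 5)

lemma g_deriv {t : ℝ} (ht : t ∈ Set.Ioo (-(2 * π / Real.sqrt 5)) (2 * π / Real.sqrt 5)) :
    HasDerivAt g (3 / 2 - Real.cos (g t)) t := by
  have h5 : (0:ℝ) < Real.sqrt 5 := Real.sqrt_pos.mpr (by norm_num)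
  set θ := Real.sqrt 5 / 4 * t with hθdef
  have hθ : θ ∈ Set.Ioo (-(π/2)) (π/2) := by
    have hu : t * Real.sqrt 5 < 2 * π := (lt_div_iff₀ h5).mp ht.2
    have hl : -(2 * π) < t * Real.sqrt 5 := by
      have := ht.1
      rw [neg_div'] at this
      exact (div_lt_iff₀ h5).mp this
    constructor <;> rw [hθdef] <;> nlinarith
  have hcos : Real.cos θ ≠ 0 := (Real.cos_pos_of_mem_Ioo hθ).ne'
  have hc2 : Real.cos θ ^ 2 ≠ 0 := pow_ne_zero _ hcos
  set z := Real.tan θ / Real.sqrt 5 with hz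
  have h5' : Real.sqrt 5 ^ 2 = 5 := Real.sq_sqrt (by norm_num)
  have hsc : Real.sin θ ^ 2 = 1 - Real.cos θ ^ 2 := by nlinarith [Real.sin_sq_add_cos_sq θ]
  have key : (1:ℝ) + z ^ 2 = (4 * Real.cos θ ^ 2 + 1) / (5 * Real.cos θ ^ 2) := by
    rw [hz, Real.tan_eq_sin_div_cos]
    field_simp
    linear_combination 5 * hsc + (Real.cos θ ^ 2 - 1) * h5'
  have hden : 4 * Real.cos θ ^ 2 + 1 ≠ 0 := by positivity
  have h1 : HasDerivAt (fun t : ℝ => Real.sqrt 5 / 4 * t) (Real.sqrt 5 / 4) t := by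
    simpa using (hasDerivAt_id t).const_mul (Real.sqrt 5 / 4)
  have h2 : HasDerivAt Real.tan (1 / Real.cos θ ^ 2) θ := Real.hasDerivAt_tan hcos
  have h3 := (h2.comp t h1).div_const (Real.sqrt 5)
  have h4 := ((Real.hasDerivAt_arctan z).comp t h3).const_mul 2
  refine HasDerivAt.congr_deriv h4 ?_
  symm
  have hg : g t = 2 * Real.arctan z := rfl
  rw [hg, Real.cos_two_mul, Real.cos_arctan, div_pow, one_pow,
    Real.sq_sqrt (by positivity : (0:ℝ) ≤ 1 + z^2), key]
  field_simp
  ring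

/-- If `x` satisfies `ẋ = 3/2 - cos x` with `x 0 = 0`, then
`x(t) = 2 arctan(tan(√5 t/4)/√5)` for `t ∈ (-2π/√5, 2π/√5)`. -/
theorem autonomous_ode_solution
    (x : ℝ → ℝ)
    (hx : ∀ t, HasDerivAt x (3 / 2 - Real.cos (x t)) t)
    (hx0 : x 0 = 0) :
    ∀ t ∈ Set.Ioo (-(2 * π / Real.sqrt 5)) (2 * π / Real.sqrt 5),
      x t = 2 * Real.arctan (Real.tan (Real.sqrt 5 / 4 * t) / Real.sqrt 5) := by

  have h5 : (0:ℝ) < Real.sqrt 5 := Real.sqrt_pos.mpr (by norm_num)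
  have hmem : (0:ℝ) ∈ Set.Ioo (-(2 * π / Real.sqrt 5)) (2 * π / Real.sqrt 5) := by
    constructor
    · simp only [neg_lt, neg_zero]
      positivity
    · positivity
  have hlip : ∀ t : ℝ, LipschitzOnWith 1 (fun u : ℝ => 3 / 2 - Real.cos u)
      ((fun _ : ℝ => (Set.univ : Set ℝ)) t) := by
    intro t
    apply LipschitzWith.lipschitzOnWith
    have hc : LipschitzWith 1 (fun u : ℝ => 3 / 2 - Real.cos u) := by
      apply lipschitzWith_of_nnnorm_deriv_le
      · exact (differentiable_const _).sub Real.differentiable_cos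
      · intro u
        have : deriv (fun u : ℝ => 3 / 2 - Real.cos u) u = Real.sin u := by
          rw [deriv_const_sub]
          simp
        rw [this, ← NNReal.coe_le_coe]
        simpa using Real.abs_sin_le_one u
    exact hc
  have := ODE_solution_unique_of_mem_Ioo (v := fun _ u => 3 / 2 - Real.cos u)
    (s := fun _ => Set.univ) (K := 1) (f := x) (g := g)
    (t₀ := (0:ℝ)) (a := -(2 * π / Real.sqrt 5)) (b := 2 * π / Real.sqrt 5)
    (fun t _ => hlip t) hmem
    (fun t ht => ⟨hx t, Set.mem_univ _⟩)
    (fun t ht => ⟨g_deriv ht, Set.mem_univ _⟩)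
    (by rw [hx0]; simp [g])
  intro t ht
  exact this ht
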